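/- Let (X, μ) be a measure space, let λ₊, λ₋ ∈ L¹(μ) be nonnegative, and let v, w be measurable real-valued functions such that λ₊·(w − v)⁺ and λ₋·(w − v)⁻ are integrable. Then for every ε > 0, 0 ≤ Ψ_v(w) − ∫_X [λ₊·G_ε(w − v) + λ₋·G_ε(v − w)] dμ ≤ (ε/2)·(‖λ₊‖_{L¹(μ)} + ‖λ₋‖_{L¹(μ)}). -/
import Mathlib


open MeasureTheory

/-- The regularization `G_ε` of the positive part function. -/
noncomputable def Geps (ε t : ℝ) : ℝ :=
  if t ≤ 0 then 0 else if t ≤ ε then t ^ 2 / (2 * ε) else t - ε / 2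

lemma Geps_nonneg {ε : ℝ} (hε : 0 < ε) (t : ℝ) : 0 ≤ Geps ε t := by
  unfold Geps
  split_ifs with h1 h2
  · exact le_rfl
  · positivity
  · push_neg at h1 h2; linarith

lemma Geps_le_max {ε : ℝ} (hε : 0 < ε) (t : ℝ) : Geps ε t ≤ max t 0 := by
  unfold Geps
  split_ifs with h1 h2
  · exact le_max_right _ _
  · push_neg at h1
    have : max t 0 = t := max_eq_left h1.le
    rw [this]
    rw [div_le_iff₀ (by positivity)]
    nlinarith
  · push_neg at h1 h2
    have : max t 0 = t := max_eq_left h1.le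
    rw [this]; linarith

lemma max_sub_Geps_le {ε : ℝ} (hε : 0 < ε) (t : ℝ) : max t 0 - Geps ε t ≤ ε / 2 := by
  unfold Geps
  split_ifs with h1 h2
  · have : max t 0 = 0 := max_eq_right h1
    rw [this]; linarith
  · push_neg at h1
    have : max t 0 = t := max_eq_left h1.le
    rw [this]
    rw [sub_le_iff_le_add, ← sub_le_iff_le_add', le_div_iff₀ (by positivity : (0:ℝ) < 2 * ε)]
    nlinarith [sq_nonneg (ε - t)]
  · push_neg at h1 h2
    have : max t 0 = t := max_eq_left h1.le
    rw [this]; linarith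

lemma measurable_Geps (ε : ℝ) : Measurable (Geps ε) := by
  unfold Geps
  apply Measurable.ite (measurableSet_le measurable_id measurable_const) measurable_const
  apply Measurable.ite (measurableSet_le measurable_id measurable_const)
  · exact (measurable_id.pow_const 2).div_const _
  · exact measurable_id.sub measurable_const

theorem stmt11 {X : Type*} [MeasurableSpace X] (μ : Measure X)
    (lp lm v w : X → ℝ)
    (hlp : Integrable lp μ) (hlm : Integrable lm μ)
    (hlp0 : ∀ᵐ x ∂μ, 0 ≤ lp x) (hlm0 : ∀ᵐ x ∂μ, 0 ≤ lm x)
    (hv : Measurable v) (hw : Measurable w)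
    (hint1 : Integrable (fun x => lp x * max (w x - v x) 0) μ)
    (hint2 : Integrable (fun x => lm x * max (v x - w x) 0) μ)
    (ε : ℝ) (hε : 0 < ε) :
    0 ≤ (∫ x, (lp x * max (w x - v x) 0 + lm x * max (v x - w x) 0) ∂μ) -
          ∫ x, (lp x * Geps ε (w x - v x) + lm x * Geps ε (v x - w x)) ∂μ ∧
    (∫ x, (lp x * max (w x - v x) 0 + lm x * max (v x - w x) 0) ∂μ) -
          (∫ x, (lp x * Geps ε (w x - v x) + lm x * Geps ε (v x - w x)) ∂μ) ≤
      (ε / 2) * ((∫ x, |lp x| ∂μ) + (∫ x, |lm x| ∂μ)) := by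
  have hmeas1 : AEStronglyMeasurable (fun x => lp x * Geps ε (w x - v x)) μ :=
    (hlp.aestronglyMeasurable.mul
      (((measurable_Geps ε).comp (hw.sub hv)).aestronglyMeasurable))
  have hmeas2 : AEStronglyMeasurable (fun x => lm x * Geps ε (v x - w x)) μ :=
    (hlm.aestronglyMeasurable.mul
      (((measurable_Geps ε).comp (hv.sub hw)).aestronglyMeasurable))
  have hg1 : Integrable (fun x => lp x * Geps ε (w x - v x)) μ := by
    refine hint1.mono hmeas1 ?_
    filter_upwards [hlp0] with x hx
    rw [Real.norm_eq_abs, Real.norm_eq_abs, abs_mul, abs_mul,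
      abs_of_nonneg hx, abs_of_nonneg (Geps_nonneg hε _),
      abs_of_nonneg (le_max_right _ _)]
    exact mul_le_mul_of_nonneg_left (Geps_le_max hε _) hx
  have hg2 : Integrable (fun x => lm x * Geps ε (v x - w x)) μ := by
    refine hint2.mono hmeas2 ?_
    filter_upwards [hlm0] with x hx
    rw [Real.norm_eq_abs, Real.norm_eq_abs, abs_mul, abs_mul,
      abs_of_nonneg hx, abs_of_nonneg (Geps_nonneg hε _),
      abs_of_nonneg (le_max_right _ _)]
    exact mul_le_mul_of_nonneg_left (Geps_le_max hε _) hx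
  have hf : Integrable (fun x => lp x * max (w x - v x) 0 + lm x * max (v x - w x) 0) μ :=
    hint1.add hint2
  have hg : Integrable (fun x => lp x * Geps ε (w x - v x) + lm x * Geps ε (v x - w x)) μ :=
    hg1.add hg2
  rw [← integral_sub hf hg]
  constructor
  · apply integral_nonneg_of_ae
    filter_upwards [hlp0, hlm0] with x hp hm
    have h1 := Geps_le_max hε (w x - v x)
    have h2 := Geps_le_max hε (v x - w x)
    simp only [Pi.zero_apply]
    nlinarith [mul_nonneg hp (sub_nonneg.2 h1), mul_nonneg hm (sub_nonneg.2 h2)]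
  · have hbound : Integrable (fun x => ε / 2 * (|lp x| + |lm x|)) μ :=
      ((hlp.abs.add hlm.abs).const_mul _)
    calc ∫ x, ((lp x * max (w x - v x) 0 + lm x * max (v x - w x) 0) -
          (lp x * Geps ε (w x - v x) + lm x * Geps ε (v x - w x))) ∂μ
        ≤ ∫ x, ε / 2 * (|lp x| + |lm x|) ∂μ := by
          apply integral_mono_ae (hf.sub hg) hbound
          filter_upwards [hlp0, hlm0] with x hp hm
          have h1 := max_sub_Geps_le hε (w x - v x)
          have h2 := max_sub_Geps_le hε (v x - w x)
          have h3 := Geps_le_max hε (w x - v x)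
          have h4 := Geps_le_max hε (v x - w x)
          rw [abs_of_nonneg hp, abs_of_nonneg hm]
          simp only [Pi.sub_apply]
          nlinarith [mul_le_mul_of_nonneg_left h1 hp, mul_le_mul_of_nonneg_left h2 hm]
      _ = (ε / 2) * ((∫ x, |lp x| ∂μ) + (∫ x, |lm x| ∂μ)) := by
          rw [integral_const_mul, integral_add hlp.abs hlm.abs]
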